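/- Let U ⊆ ℝ⁴ be an open set and A₁, A₂, A₃ : U → ℝ be C^∞ functions. Define the vector fields Xⁱ := ∂_{x_i} + A_i·∂_{x_4} on U for i = 1,2,3, and for i,j ∈ {1,2,3} the functions c_{ij} := ∂_{x_i}A_j − ∂_{x_j}A_i + A_i·∂_{x_4}A_j − A_j·∂_{x_4}A_i (so that [Xⁱ,Xʲ] = c_{ij}·∂_{x_4}). Let Z := c_{23}·X¹ + c_{31}·X² + c_{12}·X³. Then Z has controlled divergence: there exist C^∞ functions g₁, g₂, g₃ : U → ℝ such that div(Z) = g₁·c_{23} + g₂·c_{31} + g₃·c_{12} on U. -/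

import Mathlib

/-- Partial derivative `∂_{x_i} g (x)` of `g : ℝ⁴ → ℝ` in the `i`-th coordinate direction. -/
noncomputable def pd4 (i : Fin 4) (g : (Fin 4 → ℝ) → ℝ) (x : Fin 4 → ℝ) : ℝ :=
  fderiv ℝ g x (Pi.single i 1)

/-- The bracket coefficients `c_{ij} = ∂_{x_i}A_j − ∂_{x_j}A_i + A_i ∂_{x_4}A_j − A_j ∂_{x_4}A_i`
(indices `i, j ∈ {1,2,3}` are represented by `Fin 3`, and `x₄` is coordinate `3 : Fin 4`),
so that `[Xⁱ, Xʲ] = c_{ij} ∂_{x_4}`. -/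
noncomputable def cbr4 (A : Fin 3 → (Fin 4 → ℝ) → ℝ) (i j : Fin 3) (x : Fin 4 → ℝ) : ℝ :=
  pd4 i.castSucc (A j) x - pd4 j.castSucc (A i) x
    + A i x * pd4 3 (A j) x - A j x * pd4 3 (A i) x

/-- The vector field `Xⁱ = ∂_{x_i} + A_i ∂_{x_4}` on `ℝ⁴` (for `i ∈ {1,2,3}`). -/
noncomputable def XF4 (A : Fin 3 → (Fin 4 → ℝ) → ℝ) (i : Fin 3) (x : Fin 4 → ℝ) :
    Fin 4 → ℝ :=
  (Pi.single i.castSucc 1 : Fin 4 → ℝ) + A i x • (Pi.single (3 : Fin 4) 1 : Fin 4 → ℝ)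

/-- The vector field `Z = c_{23}·X¹ + c_{31}·X² + c_{12}·X³` (0-based indices). -/
noncomputable def ZF4 (A : Fin 3 → (Fin 4 → ℝ) → ℝ) (x : Fin 4 → ℝ) : Fin 4 → ℝ :=
  cbr4 A 1 2 x • XF4 A 0 x + cbr4 A 2 0 x • XF4 A 1 x + cbr4 A 0 1 x • XF4 A 2 x

/-- The divergence `div(Z)(x) = ∑ₖ ∂_{x_k} Z_k(x)` of a vector field `Z` on `ℝ⁴`. -/
noncomputable def div4 (Z : (Fin 4 → ℝ) → (Fin 4 → ℝ)) (x : Fin 4 → ℝ) : ℝ :=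
  ∑ k : Fin 4, fderiv ℝ (fun y => Z y k) x (Pi.single k 1)

lemma pd4_contDiffAt {f : (Fin 4 → ℝ) → ℝ} {x : Fin 4 → ℝ}
    (hf : ContDiffAt ℝ (⊤:ℕ∞) f x) (i : Fin 4) : ContDiffAt ℝ (⊤:ℕ∞) (pd4 i f) x := by
  have h := hf.fderiv_right (m := (⊤:ℕ∞)) (by exact_mod_cast le_top)
  exact h.clm_apply contDiffAt_const

lemma pd4_diff {f : (Fin 4 → ℝ) → ℝ} {x : Fin 4 → ℝ}
    (hf : ContDiffAt ℝ (⊤:ℕ∞) f x) (i : Fin 4) : DifferentiableAt ℝ (pd4 i f) x :=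
  (pd4_contDiffAt hf i).differentiableAt (by simp)

lemma pd4_fderiv {f : (Fin 4 → ℝ) → ℝ} {x : Fin 4 → ℝ}
    (hf : ContDiffAt ℝ (⊤:ℕ∞) f x) (i k : Fin 4) :
    fderiv ℝ (pd4 i f) x (Pi.single k 1)
      = fderiv ℝ (fderiv ℝ f) x (Pi.single k 1) (Pi.single i 1) := by
  have hdf : DifferentiableAt ℝ (fderiv ℝ f) x :=
    (hf.fderiv_right (m := (⊤:ℕ∞)) (by exact_mod_cast le_top)).differentiableAt
      (by simp)
  have h : fderiv ℝ (fun y => (fderiv ℝ f y) ((fun _ : Fin 4 → ℝ => (Pi.single i 1 : Fin 4 → ℝ)) y)) x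
      = (fderiv ℝ f x).comp (fderiv ℝ (fun _ : Fin 4 → ℝ => (Pi.single i 1 : Fin 4 → ℝ)) x)
        + (fderiv ℝ (fderiv ℝ f) x).flip (Pi.single i 1) :=
    fderiv_clm_apply hdf (differentiableAt_const _)
  simp only [fderiv_fun_const, Pi.zero_apply, ContinuousLinearMap.comp_zero, zero_add] at h
  have e : pd4 i f = fun y => (fderiv ℝ f y) (Pi.single i 1) := rfl
  rw [e, h]
  rfl

lemma pd4_symm {f : (Fin 4 → ℝ) → ℝ} {x : Fin 4 → ℝ}
    (hf : ContDiffAt ℝ (⊤:ℕ∞) f x) (i k : Fin 4) :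
    pd4 k (pd4 i f) x = pd4 i (pd4 k f) x := by
  show fderiv ℝ (pd4 i f) x (Pi.single k 1) = fderiv ℝ (pd4 k f) x (Pi.single i 1)
  rw [pd4_fderiv hf, pd4_fderiv hf]
  exact (hf.isSymmSndFDerivAt (by rw [minSmoothness_of_isRCLikeNormedField]; exact WithTop.coe_le_coe.mpr (le_top : (2:ℕ∞) ≤ ⊤))) _ _

lemma cbr4_diff {A : Fin 3 → (Fin 4 → ℝ) → ℝ} {x : Fin 4 → ℝ}
    (hA : ∀ i, ContDiffAt ℝ (⊤:ℕ∞) (A i) x) (i j : Fin 3) :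
    DifferentiableAt ℝ (cbr4 A i j) x := by
  have D : ∀ m : Fin 3, DifferentiableAt ℝ (A m) x :=
    fun m => (hA m).differentiableAt (by simp)
  have e : cbr4 A i j = fun y => pd4 i.castSucc (A j) y - pd4 j.castSucc (A i) y
      + A i y * pd4 3 (A j) y - A j y * pd4 3 (A i) y := rfl
  rw [e]
  exact ((((pd4_diff (hA j) _).sub (pd4_diff (hA i) _)).add
    ((D i).mul (pd4_diff (hA j) 3))).sub ((D j).mul (pd4_diff (hA i) 3)))

lemma cbr4_fderiv {A : Fin 3 → (Fin 4 → ℝ) → ℝ} {x : Fin 4 → ℝ}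
    (hA : ∀ i, ContDiffAt ℝ (⊤:ℕ∞) (A i) x) (i j : Fin 3) (k : Fin 4) :
    pd4 k (cbr4 A i j) x
      = pd4 k (pd4 i.castSucc (A j)) x - pd4 k (pd4 j.castSucc (A i)) x
        + (A i x * pd4 k (pd4 3 (A j)) x + pd4 3 (A j) x * pd4 k (A i) x)
        - (A j x * pd4 k (pd4 3 (A i)) x + pd4 3 (A i) x * pd4 k (A j) x) := by
  have D : ∀ m : Fin 3, DifferentiableAt ℝ (A m) x :=
    fun m => (hA m).differentiableAt (by simp)
  have e : cbr4 A i j = fun y => pd4 i.castSucc (A j) y - pd4 j.castSucc (A i) y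
      + A i y * pd4 3 (A j) y - A j y * pd4 3 (A i) y := rfl
  show fderiv ℝ (cbr4 A i j) x (Pi.single k 1) = _
  rw [e, fderiv_fun_sub (((((pd4_diff (hA j) _).fun_sub (pd4_diff (hA i) _)).fun_add
        ((D i).fun_mul (pd4_diff (hA j) 3)))) ) ((D j).fun_mul (pd4_diff (hA i) 3)),
    fderiv_fun_add ((pd4_diff (hA j) _).fun_sub (pd4_diff (hA i) _)) ((D i).fun_mul (pd4_diff (hA j) 3)),
    fderiv_fun_sub (pd4_diff (hA j) _) (pd4_diff (hA i) _),
    fderiv_fun_mul (D i) (pd4_diff (hA j) 3), fderiv_fun_mul (D j) (pd4_diff (hA i) 3)]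
  simp only [ContinuousLinearMap.sub_apply, ContinuousLinearMap.add_apply,
    ContinuousLinearMap.coe_smul', Pi.smul_apply, smul_eq_mul]
  rfl

/-- for smooth `A₁,A₂,A₃` on an open `U ⊆ ℝ⁴` and
`Z = c_{23}·X¹ + c_{31}·X² + c_{12}·X³`, the divergence of `Z` lies in the ideal generated by
`c_{23}, c_{31}, c_{12}`: there are smooth `g₁,g₂,g₃` with
`div(Z) = g₁·c_{23} + g₂·c_{31} + g₃·c_{12}` on `U`. -/
theorem controlled_divergence_dim4 (U : Set (Fin 4 → ℝ)) (hU : IsOpen U)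
    (A : Fin 3 → (Fin 4 → ℝ) → ℝ)
    (hA : ∀ i, ContDiffOn ℝ (⊤ : ℕ∞) (A i) U) :
    ∃ g₁ g₂ g₃ : (Fin 4 → ℝ) → ℝ,
      ContDiffOn ℝ (⊤ : ℕ∞) g₁ U ∧ ContDiffOn ℝ (⊤ : ℕ∞) g₂ U ∧
      ContDiffOn ℝ (⊤ : ℕ∞) g₃ U ∧
      ∀ x ∈ U, div4 (ZF4 A) x =
        g₁ x * cbr4 A 1 2 x + g₂ x * cbr4 A 2 0 x + g₃ x * cbr4 A 0 1 x := by
  have hsm : ∀ m : Fin 3, ContDiffOn ℝ (⊤:ℕ∞) (fun x => 2 * pd4 3 (A m) x) U := by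
    intro m
    have h0 : ContDiffOn ℝ (((⊤:ℕ∞)) : WithTop ℕ∞) (A m) U := hA m
    have h1 : ContDiffOn ℝ (⊤:ℕ∞) (fderiv ℝ (A m)) U := by
      exact_mod_cast ((contDiffOn_infty_iff_fderiv_of_isOpen hU).mp h0).2
    exact contDiffOn_const.mul (h1.clm_apply contDiffOn_const)
  refine ⟨_, _, _, hsm 0, hsm 1, hsm 2, ?_⟩
  intro x hx
  have hAx : ∀ m : Fin 3, ContDiffAt ℝ (⊤:ℕ∞) (A m) x :=
    fun m => (hA m).contDiffAt (hU.mem_nhds hx)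
  have D : ∀ m : Fin 3, DifferentiableAt ℝ (A m) x :=
    fun m => (hAx m).differentiableAt (by simp)
  -- components of Z
  have c01 : (1:Fin 3).castSucc = (1:Fin 4) := rfl
  have hZ0 : (fun y => ZF4 A y 0) = cbr4 A 1 2 := by
    funext y
    simp [ZF4, XF4, Pi.single_apply, show ((0:Fin 3).castSucc = (0:Fin 4)) from rfl,
      show ((1:Fin 3).castSucc = (1:Fin 4)) from rfl, show ((2:Fin 3).castSucc = (2:Fin 4)) from rfl]
  have hZ1 : (fun y => ZF4 A y 1) = cbr4 A 2 0 := by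
    funext y
    simp [ZF4, XF4, Pi.single_apply, show ((0:Fin 3).castSucc = (0:Fin 4)) from rfl,
      show ((1:Fin 3).castSucc = (1:Fin 4)) from rfl, show ((2:Fin 3).castSucc = (2:Fin 4)) from rfl]
  have hZ2 : (fun y => ZF4 A y 2) = cbr4 A 0 1 := by
    funext y
    simp [ZF4, XF4, Pi.single_apply, show ((0:Fin 3).castSucc = (0:Fin 4)) from rfl,
      show ((1:Fin 3).castSucc = (1:Fin 4)) from rfl, show ((2:Fin 3).castSucc = (2:Fin 4)) from rfl]
  have hZ3 : (fun y => ZF4 A y 3)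
      = fun y => cbr4 A 1 2 y * A 0 y + cbr4 A 2 0 y * A 1 y + cbr4 A 0 1 y * A 2 y := by
    funext y
    simp [ZF4, XF4, Pi.single_apply, show ((0:Fin 3).castSucc = (0:Fin 4)) from rfl,
      show ((1:Fin 3).castSucc = (1:Fin 4)) from rfl, show ((2:Fin 3).castSucc = (2:Fin 4)) from rfl]
  have hdc : ∀ i j : Fin 3, DifferentiableAt ℝ (cbr4 A i j) x := fun i j => cbr4_diff hAx i j
  -- expand the divergence
  have hdiv : div4 (ZF4 A) x
      = pd4 0 (cbr4 A 1 2) x + pd4 1 (cbr4 A 2 0) x + pd4 2 (cbr4 A 0 1) x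
        + (pd4 3 (cbr4 A 1 2) x * A 0 x + cbr4 A 1 2 x * pd4 3 (A 0) x
          + (pd4 3 (cbr4 A 2 0) x * A 1 x + cbr4 A 2 0 x * pd4 3 (A 1) x)
          + (pd4 3 (cbr4 A 0 1) x * A 2 x + cbr4 A 0 1 x * pd4 3 (A 2) x)) := by
    rw [div4, Fin.sum_univ_four, hZ0, hZ1, hZ2, hZ3]
    have h3 : fderiv ℝ (fun y => cbr4 A 1 2 y * A 0 y + cbr4 A 2 0 y * A 1 y
        + cbr4 A 0 1 y * A 2 y) x (Pi.single 3 1)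
        = (cbr4 A 1 2 x * fderiv ℝ (A 0) x (Pi.single 3 1)
            + A 0 x * fderiv ℝ (cbr4 A 1 2) x (Pi.single 3 1))
          + (cbr4 A 2 0 x * fderiv ℝ (A 1) x (Pi.single 3 1)
            + A 1 x * fderiv ℝ (cbr4 A 2 0) x (Pi.single 3 1))
          + (cbr4 A 0 1 x * fderiv ℝ (A 2) x (Pi.single 3 1)
            + A 2 x * fderiv ℝ (cbr4 A 0 1) x (Pi.single 3 1)) := by
      rw [fderiv_fun_add (((hdc 1 2).fun_mul (D 0)).fun_add ((hdc 2 0).fun_mul (D 1))) ((hdc 0 1).fun_mul (D 2)),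
        fderiv_fun_add ((hdc 1 2).fun_mul (D 0)) ((hdc 2 0).fun_mul (D 1)),
        fderiv_fun_mul (hdc 1 2) (D 0), fderiv_fun_mul (hdc 2 0) (D 1), fderiv_fun_mul (hdc 0 1) (D 2)]
      simp only [ContinuousLinearMap.add_apply, ContinuousLinearMap.coe_smul', Pi.smul_apply,
        smul_eq_mul]
    rw [h3]
    show pd4 0 (cbr4 A 1 2) x + pd4 1 (cbr4 A 2 0) x + pd4 2 (cbr4 A 0 1) x
        + ((cbr4 A 1 2 x * pd4 3 (A 0) x + A 0 x * pd4 3 (cbr4 A 1 2) x)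
          + (cbr4 A 2 0 x * pd4 3 (A 1) x + A 1 x * pd4 3 (cbr4 A 2 0) x)
          + (cbr4 A 0 1 x * pd4 3 (A 2) x + A 2 x * pd4 3 (cbr4 A 0 1) x)) = _
    ring
  rw [hdiv]
  rw [cbr4_fderiv hAx 1 2 0, cbr4_fderiv hAx 2 0 1, cbr4_fderiv hAx 0 1 2,
    cbr4_fderiv hAx 1 2 3, cbr4_fderiv hAx 2 0 3, cbr4_fderiv hAx 0 1 3]
  simp only [show ((0:Fin 3).castSucc = (0:Fin 4)) from rfl,
    show ((1:Fin 3).castSucc = (1:Fin 4)) from rfl,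
    show ((2:Fin 3).castSucc = (2:Fin 4)) from rfl]
  rw [show pd4 1 (pd4 0 (A 2)) x = pd4 0 (pd4 1 (A 2)) x from pd4_symm (hAx 2) 0 1,
    show pd4 2 (pd4 0 (A 1)) x = pd4 0 (pd4 2 (A 1)) x from pd4_symm (hAx 1) 0 2,
    show pd4 2 (pd4 1 (A 0)) x = pd4 1 (pd4 2 (A 0)) x from pd4_symm (hAx 0) 1 2,
    show pd4 3 (pd4 1 (A 2)) x = pd4 1 (pd4 3 (A 2)) x from pd4_symm (hAx 2) 1 3,
    show pd4 3 (pd4 2 (A 1)) x = pd4 2 (pd4 3 (A 1)) x from pd4_symm (hAx 1) 2 3,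
    show pd4 3 (pd4 2 (A 0)) x = pd4 2 (pd4 3 (A 0)) x from pd4_symm (hAx 0) 2 3,
    show pd4 3 (pd4 0 (A 2)) x = pd4 0 (pd4 3 (A 2)) x from pd4_symm (hAx 2) 0 3,
    show pd4 3 (pd4 0 (A 1)) x = pd4 0 (pd4 3 (A 1)) x from pd4_symm (hAx 1) 0 3,
    show pd4 3 (pd4 1 (A 0)) x = pd4 1 (pd4 3 (A 0)) x from pd4_symm (hAx 0) 1 3]
  simp only [cbr4, show ((0:Fin 3).castSucc = (0:Fin 4)) from rfl,
    show ((1:Fin 3).castSucc = (1:Fin 4)) from rfl,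
    show ((2:Fin 3).castSucc = (2:Fin 4)) from rfl]
  ring
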